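/- In the icosahedron graph, for any two distinct vertices u and u′ and any set consisting of u′ together with its 5 neighbors (i.e., N[u′]), at most 3 of the 5 neighbors of u belong to N[u′]; consequently, given two vertices u′₁, u′₂ distinct from u, it is possible that N[u′₁] ∪ N[u′₂] covers all 5 neighbors of u, but a single closed neighborhood never does. -/

import Mathlib

open SimpleGraph Finset

/-- Edge list of the icosahedron: apex `0`, upper pentagon `1`–`5`, lower pentagon
`6`–`10`, apex `11`, with antiprism edges between the pentagons. -/
def icoEdges : List (Fin 12 × Fin 12) :=
  [(0,1),(0,2),(0,3),(0,4),(0,5),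
   (1,2),(2,3),(3,4),(4,5),(5,1),
   (6,7),(7,8),(8,9),(9,10),(10,6),
   (11,6),(11,7),(11,8),(11,9),(11,10),
   (1,6),(1,7),(2,7),(2,8),(3,8),(3,9),(4,9),(4,10),(5,10),(5,6)]

/-- The icosahedron graph: the 5-regular planar graph on 12 vertices that is the
1-skeleton of the regular icosahedron. -/
def icosahedron : SimpleGraph (Fin 12) where
  Adj u v := (u, v) ∈ icoEdges ∨ (v, u) ∈ icoEdges
  symm := ⟨fun u v h => Or.symm h⟩
  loopless := ⟨by decide⟩

instance : DecidableRel icosahedron.Adj := fun u v =>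
  inferInstanceAs (Decidable ((u, v) ∈ icoEdges ∨ (v, u) ∈ icoEdges))

/-- In the icosahedron, a single closed neighborhood `N[u']` (with `u' ≠ u`) never
covers all 5 neighbors of `u` (it contains at most 3 of them), but two closed
neighborhoods can cover all 5 neighbors of `u`. -/
theorem icosahedron_closed_neighborhood_cover :
    (∀ u u' : Fin 12, u ≠ u' →
      (icosahedron.neighborFinset u ∩ insert u' (icosahedron.neighborFinset u')).card ≤ 3) ∧
    (∀ u u' : Fin 12, u ≠ u' →
      ¬ icosahedron.neighborFinset u ⊆ insert u' (icosahedron.neighborFinset u')) ∧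
    (∃ u u'₁ u'₂ : Fin 12, u'₁ ≠ u ∧ u'₂ ≠ u ∧
      icosahedron.neighborFinset u ⊆
        insert u'₁ (icosahedron.neighborFinset u'₁) ∪
          insert u'₂ (icosahedron.neighborFinset u'₂)) := by
  refine ⟨by decide, by decide, ?_⟩
  exact ⟨0, 1, 3, by decide, by decide, by decide⟩
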